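/- Fix R ∈ {1, …, D} and suppose Assumption 3 holds for R. If R ≥ max_{i∈{1,…,L+1}} ⌈G_i/2⌉, then there exist adapter matrices (ΔW_{Kl}^h, ΔW_{Ql}^h, ΔW_{Vl}^h, ΔW_{Ol}^h) for all h ∈ {1,…,H} and l ∈ {1,…,L}, together with ΔW_{2L} and ΔW_o, each of rank at most R (all other adapters set to zero), and updated bias vectors (b̂_{1l}, b̂_{2l})_{l=1}^{L}, such that for every sequence length N ≥ 1 and every input X ∈ ℝ^{D×N}, the adapted multi-head Transformer network f satisfies f(X) = f̄(X). -/

import Mathlib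

open Matrix Finset

noncomputable section

/-- A singular value decomposition of a square real matrix: `W = U Σ Vᵀ` with
`U, V` orthogonal and singular values in descending order, recorded 0-indexed
(`σ 0` is the paper's `σ_1`) and extended by zero from index `D` on. -/
structure SVD {D : ℕ} (W : Matrix (Fin D) (Fin D) ℝ) where
  U : Matrix (Fin D) (Fin D) ℝ
  V : Matrix (Fin D) (Fin D) ℝ
  σ : ℕ → ℝ
  hU : Uᵀ * U = 1
  hV : Vᵀ * V = 1
  nonneg : ∀ i, 0 ≤ σ i
  anti : ∀ i j, i ≤ j → σ j ≤ σ i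
  tail_zero : ∀ i, D ≤ i → σ i = 0
  decomp : W = U * Matrix.diagonal (fun i : Fin D => σ i) * Vᵀ

/-- `s.trunc r` is the best rank-`r` approximation `α_r(W)` obtained by
truncating the singular value decomposition `s` of `W` to its `r` largest
singular values. -/
def SVD.trunc {D : ℕ} {W : Matrix (Fin D) (Fin D) ℝ} (s : SVD W) (r : ℕ) :
    Matrix (Fin D) (Fin D) ℝ :=
  s.U * Matrix.diagonal (fun i : Fin D => if (i : ℕ) < r then s.σ i else 0) * s.Vᵀ

/-- Column-wise softmax of a matrix. -/
def colSoftmax {m n : ℕ} (A : Matrix (Fin m) (Fin n) ℝ) :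
    Matrix (Fin m) (Fin n) ℝ :=
  Matrix.of fun i j => Real.exp (A i j) / ∑ k, Real.exp (A k j)

/-- Entrywise ReLU on matrices. -/
def reluMat {m n : ℕ} (A : Matrix (Fin m) (Fin n) ℝ) :
    Matrix (Fin m) (Fin n) ℝ :=
  Matrix.of fun i j => max (A i j) 0

/-- `b 1_Nᵀ` : the matrix whose every column is the bias vector `b`. -/
def biasMat {D : ℕ} (N : ℕ) (b : Fin D → ℝ) : Matrix (Fin D) (Fin N) ℝ :=
  Matrix.of fun i _ => b i

/-- The parameters of a multi-head Transformer network of embedding size `D`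
with `H` attention heads: per-block (indexed `1, …, L`) and per-head (indexed
`1, …, H`) attention weights `WO, WV, WK, WQ`, feedforward weights `W1, W2`
and biases `b1, b2`, and the output-layer weight `Wo`. -/
structure TFNParams (D H : ℕ) where
  WO : ℕ → ℕ → Matrix (Fin D) (Fin D) ℝ
  WV : ℕ → ℕ → Matrix (Fin D) (Fin D) ℝ
  WK : ℕ → ℕ → Matrix (Fin D) (Fin D) ℝ
  WQ : ℕ → ℕ → Matrix (Fin D) (Fin D) ℝ
  W1 : ℕ → Matrix (Fin D) (Fin D) ℝ
  W2 : ℕ → Matrix (Fin D) (Fin D) ℝ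
  b1 : ℕ → Fin D → ℝ
  b2 : ℕ → Fin D → ℝ
  Wo : Matrix (Fin D) (Fin D) ℝ

/-- Multi-head self-attention layer of the `l`-th transformer block:
`Attn_l(Z) = Σ_{h=1}^{H} W_{Ol}^h W_{Vl}^h Z · softmax((W_{Kl}^h Z)ᵀ (W_{Ql}^h Z))`. -/
def TFNParams.attn {D H : ℕ} (p : TFNParams D H) (l : ℕ) {N : ℕ}
    (Z : Matrix (Fin D) (Fin N) ℝ) : Matrix (Fin D) (Fin N) ℝ :=
  ∑ h ∈ Finset.Icc 1 H,
    p.WO l h * p.WV l h * Z * colSoftmax ((p.WK l h * Z)ᵀ * (p.WQ l h * Z))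

/-- The `l`-th transformer block:
`Z_l = W_{2l} · ReLU(W_{1l} · Attn_l(Z_{l−1}) + b_{1l} 1_Nᵀ) + b_{2l} 1_Nᵀ`. -/
def TFNParams.block {D H : ℕ} (p : TFNParams D H) (l : ℕ) {N : ℕ}
    (Z : Matrix (Fin D) (Fin N) ℝ) : Matrix (Fin D) (Fin N) ℝ :=
  p.W2 l * reluMat (p.W1 l * p.attn l Z + biasMat N (p.b1 l)) + biasMat N (p.b2 l)

/-- Output `Z_L` of the first `L` transformer blocks (with `Z_0 = X`). -/
def TFNParams.blocks {D H : ℕ} (p : TFNParams D H) {N : ℕ} :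
    ℕ → Matrix (Fin D) (Fin N) ℝ → Matrix (Fin D) (Fin N) ℝ
  | 0, X => X
  | l + 1, X => p.block (l + 1) (p.blocks l X)

/-- The full Transformer network with `L` blocks: `X ↦ softmax(W_o Z_L)`. -/
def TFNParams.forward {D H : ℕ} (p : TFNParams D H) (L : ℕ) {N : ℕ}
    (X : Matrix (Fin D) (Fin N) ℝ) : Matrix (Fin D) (Fin N) ℝ :=
  colSoftmax (p.Wo * p.blocks L X)

/-- The difference matrix whose rank-`r` truncated SVD enters the key–query
part of the non-singularity Assumption 3, for block `l` and head `h`. -/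
def EKQ {D H : ℕ} (pb p : TFNParams D H) (l h : ℕ) :
    Matrix (Fin D) (Fin D) ℝ :=
  if l = 1 then (pb.WK 1 h)ᵀ * pb.WQ 1 h - (p.WK 1 h)ᵀ * p.WQ 1 h
  else
    ((p.W2 (l - 1))ᵀ)⁻¹ * (pb.W2 (l - 1))ᵀ * (pb.WK l h)ᵀ * pb.WQ l h *
        pb.W2 (l - 1) * (p.W2 (l - 1))⁻¹ -
      (p.WK l h)ᵀ * p.WQ l h

/-- The difference matrix whose rank-`r` truncated SVD enters the
value–projection part of the non-singularity Assumption 3, for block `l` and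
head `h`. -/
def EOV {D H : ℕ} (pb p : TFNParams D H) (l h : ℕ) :
    Matrix (Fin D) (Fin D) ℝ :=
  if l = 1 then
    (p.W1 1)⁻¹ * pb.W1 1 * pb.WO 1 h * pb.WV 1 h - p.WO 1 h * p.WV 1 h
  else
    (p.W1 l)⁻¹ * pb.W1 l * pb.WO l h * pb.WV l h * pb.W2 (l - 1) *
        (p.W2 (l - 1))⁻¹ -
      p.WO l h * p.WV l h

/-- The difference matrix for the output layer in Assumption 3. -/
def EO {D H : ℕ} (pb p : TFNParams D H) (L : ℕ) : Matrix (Fin D) (Fin D) ℝ :=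
  pb.Wo * pb.W2 L - p.Wo * p.W2 L

/-- All weight matrices of a (multi-head) Transformer network with `L` blocks
and `H` heads are non-singular. -/
def AllWeightsNS {D H : ℕ} (L : ℕ) (q : TFNParams D H) : Prop :=
  (∀ l ∈ Finset.Icc 1 L, ∀ h ∈ Finset.Icc 1 H,
    (q.WO l h).det ≠ 0 ∧ (q.WV l h).det ≠ 0 ∧ (q.WK l h).det ≠ 0 ∧
      (q.WQ l h).det ≠ 0) ∧
  (∀ l ∈ Finset.Icc 1 L, (q.W1 l).det ≠ 0 ∧ (q.W2 l).det ≠ 0) ∧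
  q.Wo.det ≠ 0

/-- Rank-based functionality gap `G_i` between the target `pb` and frozen `p`
multi-head Transformer networks, for `i ∈ {1, …, L}` (blocks) and `i = L + 1`
(output layer). -/
def Gap {D H : ℕ} (L : ℕ) (pb p : TFNParams D H) (i : ℕ) : ℕ :=
  if i = L + 1 then (pb.Wo * pb.W2 L - p.Wo * p.W2 L).rank
  else if i = 1 then
    max ((Finset.Icc 1 H).sup fun h =>
        ((pb.WK 1 h)ᵀ * pb.WQ 1 h - (p.WK 1 h)ᵀ * p.WQ 1 h).rank)
      ((Finset.Icc 1 H).sup fun h =>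
        (pb.W1 1 * pb.WO 1 h * pb.WV 1 h - p.W1 1 * p.WO 1 h * p.WV 1 h).rank)
  else
    max ((Finset.Icc 1 H).sup fun h =>
        ((pb.W2 (i - 1))ᵀ * (pb.WK i h)ᵀ * pb.WQ i h * pb.W2 (i - 1) -
          (p.W2 (i - 1))ᵀ * (p.WK i h)ᵀ * p.WQ i h * p.W2 (i - 1)).rank)
      ((Finset.Icc 1 H).sup fun h =>
        (pb.W1 i * pb.WO i h * pb.WV i h * pb.W2 (i - 1) -
          p.W1 i * p.WO i h * p.WV i h * p.W2 (i - 1)).rank)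


section Aux
open Matrix

variable {D : ℕ}

lemma biasMat_mul {N : ℕ} (A : Matrix (Fin D) (Fin D) ℝ) (b : Fin D → ℝ) :
    A * biasMat N b = biasMat N (A *ᵥ b) := by
  ext i j
  simp [biasMat, Matrix.mul_apply, Matrix.mulVec, dotProduct]

lemma SVD.rank_trunc_le {W : Matrix (Fin D) (Fin D) ℝ} (s : SVD W) (r : ℕ) :
    (s.trunc r).rank ≤ r := by
  have h1 : (s.trunc r).rank ≤
      (Matrix.diagonal (fun i : Fin D => if (i : ℕ) < r then s.σ i else 0)).rank :=
    le_trans (Matrix.rank_mul_le_left _ _) (Matrix.rank_mul_le_right _ _)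
  rw [Matrix.rank_diagonal] at h1
  refine h1.trans ?_
  have h2 : Fintype.card {i : Fin D // (if (i : ℕ) < r then s.σ i else 0) ≠ 0}
      ≤ Fintype.card (Fin r) := by
    refine Fintype.card_le_of_injective
      (fun x => ⟨(x.1 : ℕ), ?_⟩) ?_
    · by_contra hc
      exact x.2 (by simp [if_neg hc])
    · intro a b hab
      exact Subtype.ext (Fin.ext (congrArg (fun z : Fin r => (z : ℕ)) hab))
  simpa using h2

lemma SVD.rank_sub_trunc_le {W : Matrix (Fin D) (Fin D) ℝ} (s : SVD W) (R : ℕ)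
    (h2R : W.rank ≤ 2 * R) : (W - s.trunc R).rank ≤ R := by
  have hdiag : W - s.trunc R =
      s.U * Matrix.diagonal (fun i : Fin D => if (i : ℕ) < R then 0 else s.σ i) * s.Vᵀ := by
    have h0 : W - s.trunc R =
        s.U * Matrix.diagonal (fun i : Fin D => s.σ i) * s.Vᵀ - s.trunc R :=
      congrArg (fun y => y - s.trunc R) s.decomp
    rw [h0, SVD.trunc, ← Matrix.sub_mul, ← Matrix.mul_sub]
    congr 1
    congr 1
    ext i j
    by_cases hi : (i : ℕ) < R <;>
      simp [Matrix.sub_apply, Matrix.diagonal_apply, hi] <;>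
      by_cases hij : i = j <;> simp [hij]
  -- card of nonzero σ ≤ rank W
  have hD : Matrix.diagonal (fun i : Fin D => s.σ i) = s.Uᵀ * W * s.V := by
    have h0 : s.Uᵀ * W * s.V =
        s.Uᵀ * (s.U * Matrix.diagonal (fun i : Fin D => s.σ i) * s.Vᵀ) * s.V :=
      congrArg (fun y => s.Uᵀ * y * s.V) s.decomp
    rw [h0]
    simp only [← Matrix.mul_assoc]
    rw [s.hU, Matrix.one_mul, Matrix.mul_assoc, s.hV, Matrix.mul_one]

  have hcard : Fintype.card {i : Fin D // s.σ (i : ℕ) ≠ 0} ≤ 2 * R := by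
    have : (Matrix.diagonal (fun i : Fin D => s.σ i)).rank ≤ W.rank := by
      rw [hD]
      exact le_trans (Matrix.rank_mul_le_left _ _) (Matrix.rank_mul_le_right _ _)
    rw [Matrix.rank_diagonal] at this
    exact this.trans h2R
  -- every index with nonzero σ is < 2R
  have hlt : ∀ i : Fin D, s.σ (i : ℕ) ≠ 0 → (i : ℕ) < 2 * R := by
    intro i hi
    have hinj : Function.Injective
        (fun k : Fin ((i : ℕ) + 1) => (⟨⟨(k : ℕ), lt_of_le_of_lt (Nat.lt_succ_iff.mp k.isLt) i.isLt⟩,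
          by
            have hσ : s.σ (i : ℕ) ≤ s.σ (k : ℕ) := s.anti _ _ (Nat.lt_succ_iff.mp k.isLt)
            have hpos : 0 < s.σ (i : ℕ) := lt_of_le_of_ne (s.nonneg _) (Ne.symm hi)
            exact ne_of_gt (lt_of_lt_of_le hpos hσ)⟩ :
            {j : Fin D // s.σ (j : ℕ) ≠ 0})) := by
      intro a b hab
      exact Fin.ext (congrArg (fun x : {j : Fin D // s.σ (j : ℕ) ≠ 0} => ((x.1 : Fin D) : ℕ)) hab)
    have := Fintype.card_le_of_injective _ hinj
    simp only [Fintype.card_fin] at this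
    omega
  rw [hdiag]
  have h1 : (s.U * Matrix.diagonal (fun i : Fin D => if (i : ℕ) < R then 0 else s.σ i) * s.Vᵀ).rank
      ≤ (Matrix.diagonal (fun i : Fin D => if (i : ℕ) < R then 0 else s.σ i)).rank :=
    le_trans (Matrix.rank_mul_le_left _ _) (Matrix.rank_mul_le_right _ _)
  rw [Matrix.rank_diagonal] at h1
  refine h1.trans ?_
  have h2 : Fintype.card {i : Fin D // (if (i : ℕ) < R then 0 else s.σ (i : ℕ)) ≠ 0}
      ≤ Fintype.card (Fin R) := by
    refine Fintype.card_le_of_injective (fun x => ⟨(x.1 : ℕ) - R, ?_⟩) ?_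
    · have hx : ¬ ((x.1 : ℕ) < R) := by
        by_contra hc
        exact x.2 (by simp [if_pos hc])
      have hσ : s.σ (x.1 : ℕ) ≠ 0 := by
        have := x.2
        rwa [if_neg hx] at this
      have := hlt x.1 hσ
      omega
    · intro a b hab
      have ha : ¬ ((a.1 : ℕ) < R) := by
        by_contra hc; exact a.2 (by simp [if_pos hc])
      have hb : ¬ ((b.1 : ℕ) < R) := by
        by_contra hc; exact b.2 (by simp [if_pos hc])
      have := congrArg Fin.val hab
      simp only at this
      have : (a.1 : ℕ) = (b.1 : ℕ) := by omega
      exact Subtype.ext (Fin.ext this)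
  simpa using h2

/-- Splitting a rank-`≤ 2R` update of a product `A * B` into two rank-`≤ R`
factor updates. -/
lemma split_lemma (A B E : Matrix (Fin D) (Fin D) ℝ) (s : SVD E) (R : ℕ)
    (hB : B.det ≠ 0) (hdet : (A * B + s.trunc R).det ≠ 0) (hrank : E.rank ≤ 2 * R) :
    ∃ dA dB : Matrix (Fin D) (Fin D) ℝ, dA.rank ≤ R ∧ dB.rank ≤ R ∧
      (A + dA) * (B + dB) = A * B + E ∧ (A + dA).det ≠ 0 := by
  have hBu : IsUnit B.det := isUnit_iff_ne_zero.mpr hB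
  refine ⟨s.trunc R * B⁻¹, (A + s.trunc R * B⁻¹)⁻¹ * (E - s.trunc R), ?_, ?_, ?_, ?_⟩
  · exact le_trans (Matrix.rank_mul_le_left _ _) (s.rank_trunc_le R)
  · exact le_trans (Matrix.rank_mul_le_right _ _) (s.rank_sub_trunc_le R hrank)
  · have hA' : (A + s.trunc R * B⁻¹) * B = A * B + s.trunc R := by
      rw [Matrix.add_mul, Matrix.mul_assoc, Matrix.nonsing_inv_mul B hBu, Matrix.mul_one]
    have hA'det : (A + s.trunc R * B⁻¹).det ≠ 0 := by
      intro hc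
      apply hdet
      rw [← hA', Matrix.det_mul, hc, zero_mul]
    have hA'u : IsUnit (A + s.trunc R * B⁻¹).det := isUnit_iff_ne_zero.mpr hA'det
    rw [Matrix.mul_add, hA', ← Matrix.mul_assoc, Matrix.mul_nonsing_inv _ hA'u,
      Matrix.one_mul]
    abel
  · intro hc
    apply hdet
    have hA' : (A + s.trunc R * B⁻¹) * B = A * B + s.trunc R := by
      rw [Matrix.add_mul, Matrix.mul_assoc, Matrix.nonsing_inv_mul B hBu, Matrix.mul_one]
    rw [← hA', Matrix.det_mul, hc, zero_mul]

end Aux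

/-- **Exact adaptation of multi-head Transformer networks via LoRA
(Theorem 5).**  Under the non-singularity Assumption 3, if
`R ≥ max_{i∈{1,…,L+1}} ⌈G_i/2⌉` then there are rank-`≤ R` adapters for all
attention weights, for `W_{2L}` and for `W_o` (all other adapters zero), and
updated biases, such that the adapted model equals the target model on every
input `X ∈ ℝ^{D×N}` for every sequence length `N ≥ 1`. -/
theorem lora_tfn_multihead_exact (D L H : ℕ)
    (hD : 1 ≤ D) (hL : 1 ≤ L) (hH : 1 ≤ H)
    (pb p : TFNParams D H)
    (R : ℕ) (hR1 : 1 ≤ R) (hRD : R ≤ D)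
    (hNSb : AllWeightsNS L pb) (hNSf : AllWeightsNS L p)
    (sKQ : ∀ l h, SVD (EKQ pb p l h))
    (sOV : ∀ l h, SVD (EOV pb p l h))
    (sO : SVD (EO pb p L))
    (hKQ : ∀ l ∈ Finset.Icc 1 L, ∀ h ∈ Finset.Icc 1 H, ∀ r ∈ Finset.Icc 1 R,
      ((p.WK l h)ᵀ * p.WQ l h + (sKQ l h).trunc r).det ≠ 0)
    (hOV : ∀ l ∈ Finset.Icc 1 L, ∀ h ∈ Finset.Icc 1 H, ∀ r ∈ Finset.Icc 1 R,
      (p.WO l h * p.WV l h + (sOV l h).trunc r).det ≠ 0)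
    (hO : ∀ r ∈ Finset.Icc 1 R, (p.Wo * p.W2 L + sO.trunc r).det ≠ 0)
    (hR : ∀ i ∈ Finset.Icc 1 (L + 1), (Gap L pb p i + 1) / 2 ≤ R) :
    ∃ (dWK dWQ dWV dWO : ℕ → ℕ → Matrix (Fin D) (Fin D) ℝ)
      (dW2L dWo : Matrix (Fin D) (Fin D) ℝ)
      (b1h b2h : ℕ → Fin D → ℝ),
      (∀ l ∈ Finset.Icc 1 L, ∀ h ∈ Finset.Icc 1 H,
        (dWK l h).rank ≤ R ∧ (dWQ l h).rank ≤ R ∧ (dWV l h).rank ≤ R ∧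
          (dWO l h).rank ≤ R) ∧
      dW2L.rank ≤ R ∧ dWo.rank ≤ R ∧
      ∀ N : ℕ, 1 ≤ N → ∀ X : Matrix (Fin D) (Fin N) ℝ,
        TFNParams.forward (H := H)
          { WO := fun l h => p.WO l h + dWO l h
            WV := fun l h => p.WV l h + dWV l h
            WK := fun l h => p.WK l h + dWK l h
            WQ := fun l h => p.WQ l h + dWQ l h
            W1 := p.W1
            W2 := fun l => if l = L then p.W2 L + dW2L else p.W2 l
            b1 := b1h
            b2 := b2h
            Wo := p.Wo + dWo } L X = pb.forward L X := by
  classical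
  obtain ⟨hNSfA, hNSfW, hNSfo⟩ := hNSf
  obtain ⟨hNSbA, hNSbW, hNSbo⟩ := hNSb
  have hRR : R ∈ Finset.Icc 1 R := Finset.mem_Icc.mpr ⟨hR1, le_refl R⟩
  have hGap2 : ∀ i ∈ Finset.Icc 1 (L + 1), Gap L pb p i ≤ 2 * R := by
    intro i hi
    have := hR i hi
    omega
  -- invertibility helpers
  have hW2u : ∀ l ∈ Finset.Icc 1 L, IsUnit (p.W2 l).det :=
    fun l hl => isUnit_iff_ne_zero.mpr (hNSfW l hl).2
  have hW2bu : ∀ l ∈ Finset.Icc 1 L, IsUnit (pb.W2 l).det :=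
    fun l hl => isUnit_iff_ne_zero.mpr (hNSbW l hl).2
  have hW1u : ∀ l ∈ Finset.Icc 1 L, IsUnit (p.W1 l).det :=
    fun l hl => isUnit_iff_ne_zero.mpr (hNSfW l hl).1
  -- rank bounds for the gap matrices
  have hrankKQ : ∀ l ∈ Finset.Icc 1 L, ∀ h ∈ Finset.Icc 1 H,
      (EKQ pb p l h).rank ≤ 2 * R := by
    intro l hl h hh
    obtain ⟨hl1, hlL⟩ := Finset.mem_Icc.mp hl
    by_cases hl1' : l = 1
    · subst hl1'
      have hg := hGap2 1 (Finset.mem_Icc.mpr ⟨le_refl 1, by omega⟩)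
      rw [Gap, if_neg (by omega), if_pos rfl] at hg
      have h1 : ((pb.WK 1 h)ᵀ * pb.WQ 1 h - (p.WK 1 h)ᵀ * p.WQ 1 h).rank ≤
          (Finset.Icc 1 H).sup (fun h =>
            ((pb.WK 1 h)ᵀ * pb.WQ 1 h - (p.WK 1 h)ᵀ * p.WQ 1 h).rank) := by
        apply Finset.le_sup hh
      rw [EKQ, if_pos rfl]
      exact le_trans (le_trans h1 (le_max_left _ _)) hg
    · have hl2 : 2 ≤ l := by omega
      have hmem : l - 1 ∈ Finset.Icc 1 L := Finset.mem_Icc.mpr ⟨by omega, by omega⟩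
      haveI := (p.W2 (l - 1)).invertibleOfIsUnitDet (hW2u _ hmem)
      have hEKQ : EKQ pb p l h =
          ((p.W2 (l - 1))ᵀ)⁻¹ *
            ((pb.W2 (l - 1))ᵀ * (pb.WK l h)ᵀ * pb.WQ l h * pb.W2 (l - 1) -
              (p.W2 (l - 1))ᵀ * (p.WK l h)ᵀ * p.WQ l h * p.W2 (l - 1)) *
            (p.W2 (l - 1))⁻¹ := by
        rw [EKQ, if_neg hl1', Matrix.mul_sub, Matrix.sub_mul]
        congr 1
        · simp only [Matrix.mul_assoc]
        · simp [Matrix.mul_assoc]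
      have hg := hGap2 l (Finset.mem_Icc.mpr ⟨by omega, by omega⟩)
      rw [Gap, if_neg (by omega), if_neg hl1'] at hg
      have h1 : ((pb.W2 (l - 1))ᵀ * (pb.WK l h)ᵀ * pb.WQ l h * pb.W2 (l - 1) -
            (p.W2 (l - 1))ᵀ * (p.WK l h)ᵀ * p.WQ l h * p.W2 (l - 1)).rank ≤
          (Finset.Icc 1 H).sup (fun h =>
            ((pb.W2 (l - 1))ᵀ * (pb.WK l h)ᵀ * pb.WQ l h * pb.W2 (l - 1) -
              (p.W2 (l - 1))ᵀ * (p.WK l h)ᵀ * p.WQ l h * p.W2 (l - 1)).rank) := by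
        apply Finset.le_sup hh
      rw [hEKQ]
      exact le_trans (le_trans (le_trans (Matrix.rank_mul_le_left _ _)
        (Matrix.rank_mul_le_right _ _)) (le_trans h1 (le_max_left _ _))) hg
  have hrankOV : ∀ l ∈ Finset.Icc 1 L, ∀ h ∈ Finset.Icc 1 H,
      (EOV pb p l h).rank ≤ 2 * R := by
    intro l hl h hh
    obtain ⟨hl1, hlL⟩ := Finset.mem_Icc.mp hl
    haveI := (p.W1 l).invertibleOfIsUnitDet (hW1u _ hl)
    by_cases hl1' : l = 1
    · subst hl1'
      have hg := hGap2 1 (Finset.mem_Icc.mpr ⟨le_refl 1, by omega⟩)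
      rw [Gap, if_neg (by omega), if_pos rfl] at hg
      have hEOV : EOV pb p 1 h =
          (p.W1 1)⁻¹ *
            (pb.W1 1 * pb.WO 1 h * pb.WV 1 h - p.W1 1 * p.WO 1 h * p.WV 1 h) := by
        rw [EOV, if_pos rfl, Matrix.mul_sub]
        congr 1
        · simp only [Matrix.mul_assoc]
        · simp [Matrix.mul_assoc]
      have h1 : (pb.W1 1 * pb.WO 1 h * pb.WV 1 h - p.W1 1 * p.WO 1 h * p.WV 1 h).rank ≤
          (Finset.Icc 1 H).sup (fun h =>
            (pb.W1 1 * pb.WO 1 h * pb.WV 1 h - p.W1 1 * p.WO 1 h * p.WV 1 h).rank) := by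
        apply Finset.le_sup hh
      rw [hEOV]
      exact le_trans (le_trans (Matrix.rank_mul_le_right _ _)
        (le_trans h1 (le_max_right _ _))) hg
    · have hl2 : 2 ≤ l := by omega
      have hmem : l - 1 ∈ Finset.Icc 1 L := Finset.mem_Icc.mpr ⟨by omega, by omega⟩
      haveI := (p.W2 (l - 1)).invertibleOfIsUnitDet (hW2u _ hmem)
      have hEOV : EOV pb p l h =
          (p.W1 l)⁻¹ *
            (pb.W1 l * pb.WO l h * pb.WV l h * pb.W2 (l - 1) -
              p.W1 l * p.WO l h * p.WV l h * p.W2 (l - 1)) *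
            (p.W2 (l - 1))⁻¹ := by
        rw [EOV, if_neg hl1', Matrix.mul_sub, Matrix.sub_mul]
        congr 1
        · simp only [Matrix.mul_assoc]
        · simp [Matrix.mul_assoc]
      have hg := hGap2 l (Finset.mem_Icc.mpr ⟨by omega, by omega⟩)
      rw [Gap, if_neg (by omega), if_neg hl1'] at hg
      have h1 : (pb.W1 l * pb.WO l h * pb.WV l h * pb.W2 (l - 1) -
            p.W1 l * p.WO l h * p.WV l h * p.W2 (l - 1)).rank ≤
          (Finset.Icc 1 H).sup (fun h =>
            (pb.W1 l * pb.WO l h * pb.WV l h * pb.W2 (l - 1) -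
              p.W1 l * p.WO l h * p.WV l h * p.W2 (l - 1)).rank) := by
        apply Finset.le_sup hh
      rw [hEOV]
      exact le_trans (le_trans (le_trans (Matrix.rank_mul_le_left _ _)
        (Matrix.rank_mul_le_right _ _)) (le_trans h1 (le_max_right _ _))) hg
  have hrankO : (EO pb p L).rank ≤ 2 * R := by
    have hg := hGap2 (L + 1) (Finset.mem_Icc.mpr ⟨by omega, le_refl _⟩)
    rw [Gap, if_pos rfl] at hg
    rw [EO]
    exact hg
  -- construct adapters by splitting
  have exKQ : ∀ l h, ∃ dA dB : Matrix (Fin D) (Fin D) ℝ,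
      l ∈ Finset.Icc 1 L → h ∈ Finset.Icc 1 H →
      dA.rank ≤ R ∧ dB.rank ≤ R ∧
        ((p.WK l h)ᵀ + dA) * (p.WQ l h + dB) =
          (p.WK l h)ᵀ * p.WQ l h + EKQ pb p l h := by
    intro l h
    by_cases hl : l ∈ Finset.Icc 1 L
    · by_cases hh : h ∈ Finset.Icc 1 H
      · obtain ⟨dA, dB, h1, h2, h3, _⟩ :=
          split_lemma ((p.WK l h)ᵀ) (p.WQ l h) (EKQ pb p l h) (sKQ l h) R
            ((hNSfA l hl h hh).2.2.2) (hKQ l hl h hh R hRR) (hrankKQ l hl h hh)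
        exact ⟨dA, dB, fun _ _ => ⟨h1, h2, h3⟩⟩
      · exact ⟨0, 0, fun _ hh' => absurd hh' hh⟩
    · exact ⟨0, 0, fun hl' _ => absurd hl' hl⟩
  choose dKA dWQ hKQs using exKQ
  have exOV : ∀ l h, ∃ dA dB : Matrix (Fin D) (Fin D) ℝ,
      l ∈ Finset.Icc 1 L → h ∈ Finset.Icc 1 H →
      dA.rank ≤ R ∧ dB.rank ≤ R ∧
        (p.WO l h + dA) * (p.WV l h + dB) =
          p.WO l h * p.WV l h + EOV pb p l h := by
    intro l h
    by_cases hl : l ∈ Finset.Icc 1 L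
    · by_cases hh : h ∈ Finset.Icc 1 H
      · obtain ⟨dA, dB, h1, h2, h3, _⟩ :=
          split_lemma (p.WO l h) (p.WV l h) (EOV pb p l h) (sOV l h) R
            ((hNSfA l hl h hh).2.1) (hOV l hl h hh R hRR) (hrankOV l hl h hh)
        exact ⟨dA, dB, fun _ _ => ⟨h1, h2, h3⟩⟩
      · exact ⟨0, 0, fun _ hh' => absurd hh' hh⟩
    · exact ⟨0, 0, fun hl' _ => absurd hl' hl⟩
  choose dWO dWV hOVs using exOV
  obtain ⟨dWo, dW2L, hdWo_rank, hdW2L_rank, hOprod0, hWo'det⟩ :=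
    split_lemma p.Wo (p.W2 L) (EO pb p L) sO R
      ((hNSfW L (Finset.mem_Icc.mpr ⟨hL, le_refl L⟩)).2) (hO R hRR) hrankO
  have hOprod : (p.Wo + dWo) * (p.W2 L + dW2L) = pb.Wo * pb.W2 L := by
    rw [hOprod0, EO]
    abel
  refine ⟨fun l h => (dKA l h)ᵀ, dWQ, dWV, dWO, dW2L, dWo, pb.b1,
    fun l => if l = L then (p.Wo + dWo)⁻¹ *ᵥ (pb.Wo *ᵥ pb.b2 L)
      else p.W2 l *ᵥ ((pb.W2 l)⁻¹ *ᵥ pb.b2 l),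
    ?_, hdW2L_rank, hdWo_rank, ?_⟩
  · intro l hl h hh
    obtain ⟨h1, h2, _⟩ := hKQs l h hl hh
    obtain ⟨h4, h5, _⟩ := hOVs l h hl hh
    exact ⟨by rw [Matrix.rank_transpose]; exact h1, h2, h5, h4⟩
  intro N hN X
  set q : TFNParams D H :=
    { WO := fun l h => p.WO l h + dWO l h
      WV := fun l h => p.WV l h + dWV l h
      WK := fun l h => p.WK l h + (dKA l h)ᵀ
      WQ := fun l h => p.WQ l h + dWQ l h
      W1 := p.W1
      W2 := fun l => if l = L then p.W2 L + dW2L else p.W2 l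
      b1 := pb.b1
      b2 := fun l => if l = L then (p.Wo + dWo)⁻¹ *ᵥ (pb.Wo *ᵥ pb.b2 L)
        else p.W2 l *ᵥ ((pb.W2 l)⁻¹ *ᵥ pb.b2 l)
      Wo := p.Wo + dWo } with hq
  -- the multiplier matrices
  set M : ℕ → Matrix (Fin D) (Fin D) ℝ :=
    fun l => if l = 0 then (1 : Matrix (Fin D) (Fin D) ℝ)
      else p.W2 l * (pb.W2 l)⁻¹ with hM
  have hM0 : M 0 = 1 := by simp [hM]
  have hMl : ∀ l : ℕ, l ≠ 0 → M l = p.W2 l * (pb.W2 l)⁻¹ := by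
    intro l hl
    simp [hM, hl]
  -- conjugation identities
  have c1 : ∀ l, 1 ≤ l → l ≤ L → ∀ h ∈ Finset.Icc 1 H,
      (M (l - 1))ᵀ * ((p.WK l h)ᵀ * p.WQ l h + EKQ pb p l h) * M (l - 1) =
        (pb.WK l h)ᵀ * pb.WQ l h := by
    intro l hl1 hlL h hh
    by_cases hl : l = 1
    · subst hl
      rw [show (1 : ℕ) - 1 = 0 from rfl, hM0, EKQ]
      simp only [reduceIte, Matrix.transpose_one, Matrix.one_mul, Matrix.mul_one]
      rw [add_sub_cancel]
    · have hl2 : 2 ≤ l := by omega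
      have hmem : l - 1 ∈ Finset.Icc 1 L := Finset.mem_Icc.mpr ⟨by omega, by omega⟩
      haveI := (p.W2 (l - 1)).invertibleOfIsUnitDet (hW2u _ hmem)
      haveI := (pb.W2 (l - 1)).invertibleOfIsUnitDet (hW2bu _ hmem)
      have hsub : l - 1 ≠ 0 := by omega
      rw [hMl _ hsub, EKQ, if_neg hl, add_sub_cancel]
      simp [Matrix.transpose_mul, Matrix.transpose_nonsing_inv, Matrix.mul_assoc]
  have c2 : ∀ l, 1 ≤ l → l ≤ L → ∀ h ∈ Finset.Icc 1 H,
      p.W1 l * ((p.WO l h * p.WV l h + EOV pb p l h) * M (l - 1)) =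
        pb.W1 l * (pb.WO l h * pb.WV l h) := by
    intro l hl1 hlL h hh
    haveI := (p.W1 l).invertibleOfIsUnitDet (hW1u _ (Finset.mem_Icc.mpr ⟨hl1, hlL⟩))
    by_cases hl : l = 1
    · subst hl
      rw [show (1 : ℕ) - 1 = 0 from rfl, hM0, EOV]
      simp only [reduceIte, Matrix.mul_one]
      rw [add_sub_cancel]
      simp [Matrix.mul_assoc]
    · have hl2 : 2 ≤ l := by omega
      have hmem : l - 1 ∈ Finset.Icc 1 L := Finset.mem_Icc.mpr ⟨by omega, by omega⟩
      haveI := (p.W2 (l - 1)).invertibleOfIsUnitDet (hW2u _ hmem)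
      haveI := (pb.W2 (l - 1)).invertibleOfIsUnitDet (hW2bu _ hmem)
      have hsub : l - 1 ≠ 0 := by omega
      rw [hMl _ hsub, EOV, if_neg hl, add_sub_cancel]
      simp [Matrix.mul_assoc]
  -- attention equality
  have attn_eq : ∀ l, 1 ≤ l → l ≤ L → ∀ (N' : ℕ) (Zb : Matrix (Fin D) (Fin N') ℝ),
      p.W1 l * q.attn l (M (l - 1) * Zb) = pb.W1 l * pb.attn l Zb := by
    intro l hl1 hlL N' Zb
    rw [TFNParams.attn, TFNParams.attn, Matrix.mul_sum, Matrix.mul_sum]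
    refine Finset.sum_congr rfl ?_
    intro h hh
    have hprodKQ : (q.WK l h)ᵀ * q.WQ l h =
        (p.WK l h)ᵀ * p.WQ l h + EKQ pb p l h := by
      have := (hKQs l h (Finset.mem_Icc.mpr ⟨hl1, hlL⟩) hh).2.2
      simpa only [hq, Matrix.transpose_add, Matrix.transpose_transpose] using this
    have hprodOV : q.WO l h * q.WV l h =
        p.WO l h * p.WV l h + EOV pb p l h :=
      (hOVs l h (Finset.mem_Icc.mpr ⟨hl1, hlL⟩) hh).2.2
    have harg : (q.WK l h * (M (l - 1) * Zb))ᵀ * (q.WQ l h * (M (l - 1) * Zb)) =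
        (pb.WK l h * Zb)ᵀ * (pb.WQ l h * Zb) := by
      have hmid : (M (l - 1))ᵀ * ((q.WK l h)ᵀ * q.WQ l h) * M (l - 1) =
          (pb.WK l h)ᵀ * pb.WQ l h := by
        rw [hprodKQ]
        exact c1 l hl1 hlL h hh
      have h2 := congrArg (fun A => A * Zb) hmid
      have h3 := congrArg (fun A => Zbᵀ * A) h2
      calc (q.WK l h * (M (l - 1) * Zb))ᵀ * (q.WQ l h * (M (l - 1) * Zb))
          = Zbᵀ * ((M (l - 1))ᵀ * ((q.WK l h)ᵀ * q.WQ l h) * M (l - 1) * Zb) := by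
            simp only [Matrix.transpose_mul, Matrix.mul_assoc]
        _ = Zbᵀ * ((pb.WK l h)ᵀ * pb.WQ l h * Zb) := h3
        _ = (pb.WK l h * Zb)ᵀ * (pb.WQ l h * Zb) := by
            simp only [Matrix.transpose_mul, Matrix.mul_assoc]
    rw [harg]
    have hval : p.W1 l * (q.WO l h * q.WV l h * M (l - 1)) =
        pb.W1 l * (pb.WO l h * pb.WV l h) := by
      rw [hprodOV, ← Matrix.mul_assoc]
      rw [Matrix.mul_assoc (p.W1 l)]
      exact c2 l hl1 hlL h hh
    have h4 := congrArg
      (fun A => A * (Zb * colSoftmax ((pb.WK l h * Zb)ᵀ * (pb.WQ l h * Zb)))) hval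
    calc p.W1 l * (q.WO l h * q.WV l h * (M (l - 1) * Zb) *
          colSoftmax ((pb.WK l h * Zb)ᵀ * (pb.WQ l h * Zb)))
        = p.W1 l * (q.WO l h * q.WV l h * M (l - 1)) *
            (Zb * colSoftmax ((pb.WK l h * Zb)ᵀ * (pb.WQ l h * Zb))) := by
          simp only [Matrix.mul_assoc]
      _ = pb.W1 l * (pb.WO l h * pb.WV l h) *
            (Zb * colSoftmax ((pb.WK l h * Zb)ᵀ * (pb.WQ l h * Zb))) := h4
      _ = pb.W1 l * (pb.WO l h * pb.WV l h * Zb *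
            colSoftmax ((pb.WK l h * Zb)ᵀ * (pb.WQ l h * Zb))) := by
          simp only [Matrix.mul_assoc]
  -- block equality below the last layer
  have block_eq : ∀ l, 1 ≤ l → l < L → ∀ (N' : ℕ) (Zb : Matrix (Fin D) (Fin N') ℝ),
      q.block l (M (l - 1) * Zb) = M l * pb.block l Zb := by
    intro l hl1 hlL N' Zb
    have hlne : l ≠ L := by omega
    have hlne0 : l ≠ 0 := by omega
    have hmem : l ∈ Finset.Icc 1 L := Finset.mem_Icc.mpr ⟨hl1, by omega⟩
    haveI := (pb.W2 l).invertibleOfIsUnitDet (hW2bu _ hmem)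
    rw [TFNParams.block, TFNParams.block]
    have hW1q : q.W1 l = p.W1 l := rfl
    have hb1q : q.b1 l = pb.b1 l := rfl
    have hW2q : q.W2 l = p.W2 l := by simp only [hq]; rw [if_neg hlne]
    have hb2q : q.b2 l = p.W2 l *ᵥ ((pb.W2 l)⁻¹ *ᵥ pb.b2 l) := by
      simp only [hq]; rw [if_neg hlne]
    rw [hW1q, hb1q, hW2q, hb2q, attn_eq l hl1 (le_of_lt hlL) N' Zb]
    rw [Matrix.mul_add, ← Matrix.mul_assoc]
    have hMl : M l = p.W2 l * (pb.W2 l)⁻¹ := by simp only [hM, if_neg hlne0]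
    rw [hMl]
    congr 1
    · congr 1
      exact (Matrix.nonsing_inv_mul_cancel_right _ _
        (isUnit_iff_ne_zero.mpr (hNSbW l hmem).2)).symm
    · rw [biasMat_mul, Matrix.mulVec_mulVec]
  -- blocks equality below the last layer
  have blocks_eq : ∀ l, l < L → q.blocks l X = M l * pb.blocks l X := by
    intro l
    induction l with
    | zero =>
      intro _
      rw [hM0]
      simp only [TFNParams.blocks, Matrix.one_mul]
    | succ n ih =>
      intro hn
      have h1 : q.blocks (n + 1) X = q.block (n + 1) (q.blocks n X) := rfl
      rw [h1, ih (by omega)]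
      have h2 : M n = M ((n + 1) - 1) := by norm_num
      rw [h2, block_eq (n + 1) (by omega) hn]
      rfl
  -- conclusion
  obtain ⟨L', rfl⟩ : ∃ L', L = L' + 1 := ⟨L - 1, by omega⟩
  have hfinal : (p.Wo + dWo) * q.blocks (L' + 1) X =
      pb.Wo * pb.blocks (L' + 1) X := by
    have h1 : q.blocks (L' + 1) X = q.block (L' + 1) (q.blocks L' X) := rfl
    have h2 : pb.blocks (L' + 1) X = pb.block (L' + 1) (pb.blocks L' X) := rfl
    rw [h1, h2, blocks_eq L' (by omega)]
    rw [TFNParams.block, TFNParams.block]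
    have hW1q : q.W1 (L' + 1) = p.W1 (L' + 1) := rfl
    have hb1q : q.b1 (L' + 1) = pb.b1 (L' + 1) := rfl
    have hW2q : q.W2 (L' + 1) = p.W2 (L' + 1) + dW2L := by
      simp only [hq]; simp
    have hb2q : q.b2 (L' + 1) = (p.Wo + dWo)⁻¹ *ᵥ (pb.Wo *ᵥ pb.b2 (L' + 1)) := by
      simp only [hq]; simp
    have hMl : M L' = M ((L' + 1) - 1) := by norm_num
    rw [hW1q, hb1q, hW2q, hb2q, hMl,
      attn_eq (L' + 1) (by omega) (le_refl _) N (pb.blocks L' X)]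
    rw [Matrix.mul_add, Matrix.mul_add, ← Matrix.mul_assoc, ← Matrix.mul_assoc,
      hOprod]
    congr 1
    rw [biasMat_mul, biasMat_mul, Matrix.mulVec_mulVec, Matrix.mul_nonsing_inv _
      (isUnit_iff_ne_zero.mpr hWo'det), Matrix.one_mulVec]
  show q.forward (L' + 1) X = pb.forward (L' + 1) X
  rw [TFNParams.forward, TFNParams.forward]
  have hWoq : q.Wo = p.Wo + dWo := rfl
  rw [hWoq, hfinal]

end
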